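/- The solution graph of a Horn formula without positive unit clauses is disconnected if and only if the formula has a non-empty maximal self-implicating set of variables containing no restraint set. -/

import Mathlib

def SatClause {n : ℕ} (a : Fin n → Bool) (c : List (Fin n × Bool)) : Prop :=
  ∃ l ∈ c, (if l.2 then a l.1 else !(a l.1)) = true

def IsHornClause {n : ℕ} (c : List (Fin n × Bool)) : Prop :=
  (c.filter (fun l => l.2)).length ≤ 1

def Reach {ι : Type*} [Fintype ι] (S : Set (ι → Bool)) : (ι → Bool) → (ι → Bool) → Prop :=
  Relation.ReflTransGen (fun u v => u ∈ S ∧ v ∈ S ∧ hammingDist u v = 1)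

def Connected {ι : Type*} [Fintype ι] (S : Set (ι → Bool)) : Prop :=
  ∀ a ∈ S, ∀ b ∈ S, Reach S a b

def Implied {n : ℕ} (S : Set (Fin n → Bool)) (U : Finset (Fin n)) (x : Fin n) : Prop :=
  ∀ a ∈ S, (∀ u ∈ U, a u = true) → a x = true

def MaxSelfImplicating {n : ℕ} (S : Set (Fin n → Bool)) (U : Finset (Fin n)) : Prop :=
  (∀ x ∈ U, Implied S (U.erase x) x) ∧ (∀ x, Implied S U x → x ∈ U)

def NoRestraintSet {n : ℕ} (φ : List (List (Fin n × Bool))) (U : Finset (Fin n)) : Prop :=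
  ∀ c ∈ φ, (∀ l ∈ c, l.2 = false) → ¬ (∀ l ∈ c, l.1 ∈ U)

/-! ### Auxiliary lemmas -/

lemma len_le_one_mem {α : Type*} {l : List α} (h : l.length ≤ 1) {x y : α}
    (hx : x ∈ l) (hy : y ∈ l) : x = y := by
  cases l with
  | nil => cases hx
  | cons a t =>
    cases t with
    | nil => simp at hx hy; rw [hx, hy]
    | cons b t' => simp at h

lemma horn_pos_unique {n : ℕ} {c : List (Fin n × Bool)} (h : IsHornClause c)
    {l l' : Fin n × Bool} (hl : l ∈ c) (hl' : l' ∈ c) (h2 : l.2 = true) (h2' : l'.2 = true) :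
    l = l' :=
  len_le_one_mem h (List.mem_filter.2 ⟨hl, h2⟩) (List.mem_filter.2 ⟨hl', h2'⟩)

lemma meet_sat {n : ℕ} {c : List (Fin n × Bool)} (hHorn : IsHornClause c)
    {a b : Fin n → Bool} (ha : SatClause a c) (hb : SatClause b c) :
    SatClause (fun i => a i && b i) c := by
  obtain ⟨la, hla, hsa⟩ := ha
  obtain ⟨lb, hlb, hsb⟩ := hb
  by_cases h2a : la.2 = true
  · by_cases h2b : lb.2 = true
    · have he : la = lb := horn_pos_unique hHorn hla hlb h2a h2b
      refine ⟨la, hla, ?_⟩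
      rw [he] at hsa ⊢
      simp [h2b] at hsa hsb ⊢
      exact ⟨hsa, hsb⟩
    · refine ⟨lb, hlb, ?_⟩
      simp only [Bool.not_eq_true] at h2b
      simp [h2b] at hsb ⊢
      exact Or.inr hsb
  · refine ⟨la, hla, ?_⟩
    simp only [Bool.not_eq_true] at h2a
    simp [h2a] at hsa ⊢
    exact Or.inl hsa

lemma zero_sat {n : ℕ} {c : List (Fin n × Bool)} (hHorn : IsHornClause c)
    (hNoPosUnit : ∀ i : Fin n, c ≠ [(i, true)]) (hne : c ≠ []) :
    SatClause (fun _ => false) c := by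
  by_cases hneg : ∃ l ∈ c, l.2 = false
  · obtain ⟨l, hl, h2⟩ := hneg
    exact ⟨l, hl, by simp [h2]⟩
  · push_neg at hneg
    have hall : ∀ l ∈ c, l.2 = true := fun l hl => by
      have := hneg l hl; simpa using this
    have hfil : c.filter (fun l => l.2) = c := List.filter_eq_self.2 (fun l hl => hall l hl)
    have hlen : c.length ≤ 1 := by
      have := hHorn; rw [IsHornClause, hfil] at this; exact this
    exfalso
    cases c with
    | nil => exact hne rfl
    | cons l t =>
      cases t with
      | nil =>
        have h2 : l.2 = true := hall l (by simp)
        have : l = (l.1, true) := by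
          ext
          · rfl
          · exact h2
        exact hNoPosUnit l.1 (by rw [← this])
      | cons l' t' => simp at hlen

lemma dist_one_exists {ι : Type*} [Fintype ι] [DecidableEq ι] {a b : ι → Bool}
    (h : hammingDist a b = 1) : ∃ j, a j ≠ b j ∧ ∀ i, i ≠ j → a i = b i := by
  rw [hammingDist, Finset.card_eq_one] at h
  obtain ⟨j, hj⟩ := h
  refine ⟨j, ?_, ?_⟩
  · have : j ∈ ({j} : Finset ι) := Finset.mem_singleton_self j
    rw [← hj, Finset.mem_filter] at this
    exact this.2
  · intro i hi
    by_contra hne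
    have : i ∈ ({j} : Finset ι) := by
      rw [← hj, Finset.mem_filter]; exact ⟨Finset.mem_univ i, hne⟩
    exact hi (Finset.mem_singleton.1 this)

lemma dist_update {n : ℕ} (a : Fin n → Bool) (x : Fin n) (v : Bool) (h : a x ≠ v) :
    hammingDist a (Function.update a x v) = 1 := by
  rw [hammingDist, Finset.card_eq_one]
  refine ⟨x, ?_⟩
  ext i
  simp only [Finset.mem_filter, Finset.mem_univ, true_and, Finset.mem_singleton]
  constructor
  · intro hi
    by_contra hne
    rw [Function.update_of_ne hne] at hi
    exact hi rfl
  · intro hi; subst hi; rw [Function.update_self]; exact h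

lemma reach_symm {ι : Type*} [Fintype ι] {S : Set (ι → Bool)} {a b : ι → Bool}
    (h : Reach S a b) : Reach S b a := by
  refine (@Relation.ReflTransGen.symmetric _ (fun u v => u ∈ S ∧ v ∈ S ∧ hammingDist u v = 1) ⟨?_⟩).symm _ _ h
  rintro u v ⟨hu, hv, hd⟩
  exact ⟨hv, hu, by rwa [hammingDist_comm]⟩

lemma reach_preserve {n : ℕ} {S : Set (Fin n → Bool)} {U : Finset (Fin n)}
    (hsi : ∀ x ∈ U, Implied S (U.erase x) x)
    {a b : Fin n → Bool} (h : Reach S a b) (ha : ∀ u ∈ U, a u = true) :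
    ∀ u ∈ U, b u = true := by
  induction h with
  | refl => exact ha
  | tail _ hstep ih =>
    obtain ⟨hmS, hcS, hd⟩ := hstep
    obtain ⟨j, _, hoth⟩ := dist_one_exists hd
    by_contra hcon
    push_neg at hcon
    obtain ⟨u, hu, hbu⟩ := hcon
    have hju : u = j := by
      by_contra hne
      exact hbu ((hoth u hne) ▸ ih u hu)
    apply hbu
    apply hsi u hu _ hcS
    intro v hv
    obtain ⟨hvne, hvU⟩ := Finset.mem_erase.1 hv
    rw [← hoth v (fun h => hvne (h.trans hju.symm))]
    exact ih v hvU

theorem horn_disconnected_iff_nonempty_max_self_implicating (n : ℕ)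
    (φ : List (List (Fin n × Bool)))
    (hHorn : ∀ c ∈ φ, IsHornClause c)
    (hNoPosUnit : ∀ c ∈ φ, ∀ i : Fin n, c ≠ [(i, true)]) :
    let S : Set (Fin n → Bool) := {a | ∀ c ∈ φ, SatClause a c}
    (¬ Connected S ↔
      ∃ U : Finset (Fin n), U.Nonempty ∧ MaxSelfImplicating S U ∧ NoRestraintSet φ U) := by
  intro S
  classical
  constructor
  · -- forward direction
    intro hnc
    have hnil : [] ∉ φ := by
      intro h
      apply hnc
      intro a haS
      exfalso
      obtain ⟨l, hl, -⟩ := haS [] h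
      simp at hl
    have hz : (fun _ => false) ∈ S := fun c hc =>
      zero_sat (hHorn c hc) (hNoPosUnit c hc) (fun h => hnil (h ▸ hc))
    obtain ⟨a0, ha0, b0, hb0, hnr⟩ : ∃ a ∈ S, ∃ b ∈ S, ¬ Reach S a b := by
      by_contra h; push_neg at h; exact hnc h
    have hex : ∃ a, a ∈ S ∧ ¬ Reach S (fun _ => false) a := by
      by_cases h1 : Reach S (fun _ => false) a0
      · exact ⟨b0, hb0, fun h2 => hnr ((reach_symm h1).trans h2)⟩
      · exact ⟨a0, ha0, h1⟩
    have hexk : ∃ k, ∃ a, (a ∈ S ∧ ¬ Reach S (fun _ => false) a) ∧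
        (Finset.univ.filter (fun i => a i = true)).card = k :=
      ⟨_, hex.choose, hex.choose_spec, rfl⟩
    obtain ⟨a, ⟨haS, haR⟩, hwt⟩ := Nat.find_spec hexk
    have hmin : ∀ m, m ∈ S →
        (Finset.univ.filter (fun i => m i = true)).card < Nat.find hexk →
        Reach S (fun _ => false) m := by
      intro m hm hlt
      by_contra hr
      exact Nat.find_min hexk hlt ⟨m, ⟨hm, hr⟩, rfl⟩
    refine ⟨Finset.univ.filter (fun i => a i = true), ?_, ⟨?_, ?_⟩, ?_⟩
    · -- nonempty
      rcases Finset.eq_empty_or_nonempty (Finset.univ.filter (fun i => a i = true)) with he | hne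
      · exfalso
        apply haR
        have haz : a = (fun _ => false) := by
          funext i
          by_contra hne
          have hi : a i = true := by
            cases h : a i
            · exact absurd h hne
            · rfl
          have : i ∈ Finset.univ.filter (fun i => a i = true) := by simp [hi]
          rw [he] at this
          simp at this
        rw [haz]
        exact Relation.ReflTransGen.refl
      · exact hne
    · -- self-implicating
      intro x hx
      have hax : a x = true := by simpa using hx
      by_contra hni
      rw [Implied] at hni
      push_neg at hni
      obtain ⟨b, hbS, hbU, hbx⟩ := hni
      have hbx' : b x = false := by simpa using hbx
      have hmS : (fun i => a i && b i) ∈ S := fun c hc =>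
        meet_sat (hHorn c hc) (haS c hc) (hbS c hc)
      have hma : (fun i => a i && b i) = Function.update a x false := by
        funext i
        by_cases hix : i = x
        · subst hix; simp [Function.update_self, hbx']
        · rw [Function.update_of_ne hix]
          by_cases hiU : a i = true
          · have hbi : b i = true := hbU i (Finset.mem_erase.2 ⟨hix, by simp [hiU]⟩)
            simp [hiU, hbi]
          · have hif : a i = false := by
              cases h : a i
              · rfl
              · exact absurd h hiU
            simp [hif]
      have hd : hammingDist a (fun i => a i && b i) = 1 := by
        rw [hma]; exact dist_update a x false (by simp [hax])
      have hlt : (Finset.univ.filter (fun i => (a i && b i) = true)).card <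
          (Finset.univ.filter (fun i => a i = true)).card := by
        apply Finset.card_lt_card
        rw [Finset.ssubset_iff_of_subset]
        · refine ⟨x, by simp [hax], ?_⟩
          simp [hax, hbx']
        · intro i hi
          simp only [Finset.mem_filter, Finset.mem_univ, true_and, Bool.and_eq_true] at hi ⊢
          exact hi.1
      have hzm := hmin _ hmS (hwt ▸ hlt)
      exact haR (hzm.tail ⟨hmS, haS, by rwa [hammingDist_comm]⟩)
    · -- maximality
      intro x hix
      have := hix a haS (fun u hu => by simpa using hu)
      simp [this]
    · -- no restraint set
      intro c hc hneg hall
      obtain ⟨l, hl, hsat⟩ := haS c hc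
      rw [hneg l hl] at hsat
      simp only [Bool.false_eq_true, if_false, Bool.not_eq_true'] at hsat
      have := hall l hl
      simp [hsat] at this
  · -- backward direction
    rintro ⟨U, hUne, ⟨hsi, hmax⟩, hnr⟩
    have hnil : [] ∉ φ := fun h => hnr [] h (by simp) (by simp)
    have hz : (fun _ => false) ∈ S := fun c hc =>
      zero_sat (hHorn c hc) (hNoPosUnit c hc) (fun h => hnil (h ▸ hc))
    have haUS : (fun i => if i ∈ U then true else false) ∈ S := by
      intro c hc
      by_contra hns
      rw [SatClause] at hns
      push_neg at hns
      have hnegvar : ∀ l ∈ c, l.2 = false → l.1 ∈ U := by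
        intro l hl h2
        by_contra hni
        exact hns l hl (by simp [h2, hni])
      by_cases hpos : ∃ l ∈ c, l.2 = true
      · obtain ⟨l0, hl0, h20⟩ := hpos
        have himp : Implied S U l0.1 := by
          intro s hsS hsU
          obtain ⟨l, hl, hsat⟩ := hsS c hc
          by_cases h2 : l.2 = true
          · have heq := horn_pos_unique (hHorn c hc) hl hl0 h2 h20
            rw [← heq]
            simpa [h2] using hsat
          · exfalso
            simp only [Bool.not_eq_true] at h2
            have hlU := hnegvar l hl h2
            have hs1 := hsU l.1 hlU
            rw [h2] at hsat
            simp [hs1] at hsat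
        have hmem0 := hmax l0.1 himp
        exact hns l0 hl0 (by simp [h20, hmem0])
      · push_neg at hpos
        have hallneg : ∀ l ∈ c, l.2 = false := fun l hl => by
          have := hpos l hl; simpa using this
        exact hnr c hc hallneg (fun l hl => hnegvar l hl (hallneg l hl))
    intro hcon
    have hreach := hcon _ haUS (fun _ => false) hz
    have hpres := reach_preserve hsi hreach (fun u hu => by simp [hu])
    obtain ⟨u, hu⟩ := hUne
    have := hpres u hu
    simp at this
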